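/- There exists a constant C > 0 such that for all κ ≥ 4 the following holds. Set θ₀ = π/2 − π/(2√κ) and define h : [0, π] → ℝ by h(θ) = π + θ for θ ∈ [0, θ₀], h(θ) = π − (θ₀/(π/2 − θ₀))·(θ − π/2) for θ ∈ (θ₀, π − θ₀], and h(θ) = θ for θ ∈ (π − θ₀, π]. Then E(h) ≤ C·√κ, where E(h) = (1/2)·∫₀^π [h'(θ)²·sin θ + sin²(h(θ))/sin θ + κ·sin²(h(θ) − θ)·sin θ] dθ. -/

import Mathlib

open Real Set

private lemma sin_ge_half' {θ : ℝ} (h1 : π/4 ≤ θ) (h2 : θ ≤ 3*π/4) :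
    (1:ℝ)/2 ≤ Real.sin θ := by
  have hmain : ∀ x : ℝ, π/4 ≤ x → x ≤ π/2 → (1:ℝ)/2 ≤ Real.sin x := by
    intro x hx1 hx2
    have h := Real.sin_le_sin_of_le_of_le_pi_div_two (x := π/4) (y := x)
      (by linarith [Real.pi_pos]) hx2 hx1
    have : Real.sin (π/4) = Real.sqrt 2 / 2 := Real.sin_pi_div_four
    have h2' : (1:ℝ) ≤ Real.sqrt 2 := by
      nlinarith [Real.sq_sqrt (by norm_num : (2:ℝ) ≥ 0), Real.sqrt_nonneg 2]
    linarith [h, this ▸ h]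
  rcases le_or_gt θ (π/2) with hc | hc
  · exact hmain θ h1 hc
  · have : Real.sin θ = Real.sin (π - θ) := (Real.sin_pi_sub θ).symm
    rw [this]
    exact hmain _ (by linarith) (by linarith)

/-- Energy bound for the sawtooth initial profile: there is a universal constant
    C > 0 such that for all κ ≥ 4 the piecewise-linear profile h (with break at
    θ₀ = π/2 − π/(2√κ)) satisfies E(h) ≤ C√κ. -/
theorem energy_bound_initial_profile :
    ∃ C : ℝ, 0 < C ∧ ∀ κ : ℝ, 4 ≤ κ →
      ∀ θ₀ : ℝ, θ₀ = π / 2 - π / (2 * Real.sqrt κ) →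
      ∀ h : ℝ → ℝ,
        (h = fun θ =>
          if θ ≤ θ₀ then π + θ
          else if θ ≤ π - θ₀ then π - (θ₀ / (π / 2 - θ₀)) * (θ - π / 2)
          else θ) →
        (1 / 2) * (∫ θ in (0 : ℝ)..π,
            (deriv h θ) ^ 2 * Real.sin θ
            + Real.sin (h θ) ^ 2 / Real.sin θ
            + κ * Real.sin (h θ - θ) ^ 2 * Real.sin θ)
          ≤ C * Real.sqrt κ := by
  refine ⟨7, by norm_num, ?_⟩
  intro κ hκ θ₀ hθ₀ h hh
  set F : ℝ → ℝ := fun θ =>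
      (deriv h θ) ^ 2 * Real.sin θ
      + Real.sin (h θ) ^ 2 / Real.sin θ
      + κ * Real.sin (h θ - θ) ^ 2 * Real.sin θ with hF
  -- basic facts
  have hκ0 : (0:ℝ) < κ := by linarith
  have hs2 : (2:ℝ) ≤ Real.sqrt κ := by
    have : Real.sqrt 4 ≤ Real.sqrt κ := Real.sqrt_le_sqrt hκ
    rwa [show (4:ℝ) = 2^2 by norm_num, Real.sqrt_sq (by norm_num)] at this
  have hs0 : (0:ℝ) < Real.sqrt κ := by linarith
  have hsq : Real.sqrt κ * Real.sqrt κ = κ := Real.mul_self_sqrt hκ0.le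
  have hπ : (0:ℝ) < π := Real.pi_pos
  have hπ4 : π ≤ 4 := Real.pi_le_four
  have hd0 : (0:ℝ) < π / (2 * Real.sqrt κ) := by positivity
  have hd4 : π / (2 * Real.sqrt κ) ≤ π / 4 := by
    apply div_le_div_of_nonneg_left hπ.le (by norm_num) (by linarith)
  have hθ₀4 : π/4 ≤ θ₀ := by rw [hθ₀]; linarith
  have hθ₀2 : θ₀ < π/2 := by rw [hθ₀]; linarith
  have hθ₀0 : 0 < θ₀ := by linarith
  have hmid : θ₀ < π - θ₀ := by linarith
  have hmid4 : π - θ₀ ≤ 3*π/4 := by linarith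
  have hmidπ : π - θ₀ < π := by linarith
  -- slope of middle piece
  set m : ℝ := θ₀ / (π / 2 - θ₀) with hm
  have hden : (0:ℝ) < π/2 - θ₀ := by linarith
  have hm0 : 0 ≤ m := div_nonneg hθ₀0.le hden.le
  have hmle : m ≤ Real.sqrt κ := by
    rw [hm, div_le_iff₀ hden]
    have hden' : π/2 - θ₀ = π / (2 * Real.sqrt κ) := by rw [hθ₀]; ring
    rw [hden']
    have hkey : Real.sqrt κ * (π / (2 * Real.sqrt κ)) = π/2 := by
      field_simp
    rw [hkey]; linarith
  have hm2 : m^2 ≤ κ := by nlinarith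
  -- pointwise formulas/bounds on the three open intervals
  have hderiv1 : ∀ θ ∈ Ioo (0:ℝ) θ₀, deriv h θ = 1 := by
    intro θ hθ
    have hev : h =ᶠ[nhds θ] fun x => π + x := by
      filter_upwards [Iio_mem_nhds hθ.2] with x hx
      rw [hh]
      simp only [if_pos (le_of_lt (Set.mem_Iio.mp hx))]
    rw [hev.deriv_eq]
    simpa using ((hasDerivAt_id θ).const_add π).deriv
  have hderiv2 : ∀ θ ∈ Ioo θ₀ (π - θ₀), deriv h θ = -m := by
    intro θ hθ
    have hev : h =ᶠ[nhds θ] fun x => π - m * (x - π/2) := by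
      filter_upwards [Ioo_mem_nhds hθ.1 hθ.2] with x hx
      rw [hh]
      obtain ⟨hx1, hx2⟩ := Set.mem_Ioo.mp hx
      simp only [if_neg (not_le.2 hx1), if_pos (le_of_lt hx2)]
    rw [hev.deriv_eq]
    have : HasDerivAt (fun x : ℝ => π - m * (x - π/2)) (-(m * 1)) θ :=
      (((hasDerivAt_id θ).sub_const (π/2)).const_mul m).const_sub π
    simpa using this.deriv
  have hderiv3 : ∀ θ ∈ Ioo (π - θ₀) π, deriv h θ = 1 := by
    intro θ hθ
    have hev : h =ᶠ[nhds θ] fun x => x := by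
      filter_upwards [Ioi_mem_nhds hθ.1] with x hx
      rw [hh]
      have hx' : π - θ₀ < x := Set.mem_Ioi.mp hx
      simp only [if_neg (not_le.2 (lt_of_le_of_lt hmid.le hx')),
        if_neg (not_le.2 hx')]
    rw [hev.deriv_eq]
    exact deriv_id θ
  have hval1 : ∀ θ ∈ Ioo (0:ℝ) θ₀, F θ = 2 * Real.sin θ := by
    intro θ hθ
    have hsθ : 0 < Real.sin θ := Real.sin_pos_of_pos_of_lt_pi hθ.1 (by linarith [hθ.2])
    have hhθ : h θ = π + θ := by rw [hh]; simp only [if_pos (le_of_lt hθ.2)]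
    rw [hF]
    simp only [hderiv1 θ hθ, hhθ]
    rw [show π + θ - θ = π by ring, Real.sin_pi, show π + θ = θ + π by ring,
      Real.sin_add_pi, neg_sq, sq (Real.sin θ), mul_div_assoc,
      div_self hsθ.ne', mul_one]
    ring
  have hval3 : ∀ θ ∈ Ioo (π - θ₀) π, F θ = 2 * Real.sin θ := by
    intro θ hθ
    have hsθ : 0 < Real.sin θ := Real.sin_pos_of_pos_of_lt_pi (by linarith [hθ.1]) hθ.2
    have hhθ : h θ = θ := by
      rw [hh]
      simp only [if_neg (not_le.2 (lt_of_le_of_lt hmid.le hθ.1)),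
        if_neg (not_le.2 hθ.1)]
    rw [hF]
    simp only [hderiv3 θ hθ, hhθ]
    rw [sub_self, Real.sin_zero, sq (Real.sin θ), mul_div_assoc,
      div_self hsθ.ne', mul_one]
    ring
  have hbound2 : ∀ θ ∈ Ioo θ₀ (π - θ₀), 0 ≤ F θ ∧ F θ ≤ 2*κ + 2 := by
    intro θ hθ
    have hθ4 : π/4 ≤ θ := by linarith [hθ.1]
    have hθ34 : θ ≤ 3*π/4 := by linarith [hθ.2]
    have hsinh : (1:ℝ)/2 ≤ Real.sin θ := sin_ge_half' hθ4 hθ34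
    have hsθ : 0 < Real.sin θ := by linarith
    have hsθ1 : Real.sin θ ≤ 1 := Real.sin_le_one θ
    have hd2 : (deriv h θ)^2 = m^2 := by rw [hderiv2 θ hθ]; ring
    constructor
    · have t1 : 0 ≤ (deriv h θ)^2 * Real.sin θ := by positivity
      have t2 : 0 ≤ Real.sin (h θ)^2 / Real.sin θ := by positivity
      have t3 : 0 ≤ κ * Real.sin (h θ - θ)^2 * Real.sin θ := by positivity
      rw [hF]; dsimp only; linarith
    · have t1 : (deriv h θ)^2 * Real.sin θ ≤ κ := by
        rw [hd2]
        calc m^2 * Real.sin θ ≤ m^2 * 1 :=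
              mul_le_mul_of_nonneg_left hsθ1 (sq_nonneg m)
          _ = m^2 := mul_one _
          _ ≤ κ := hm2
      have t2 : Real.sin (h θ)^2 / Real.sin θ ≤ 2 := by
        rw [div_le_iff₀ hsθ]
        have := Real.sin_sq_le_one (h θ)
        linarith
      have t3 : κ * Real.sin (h θ - θ)^2 * Real.sin θ ≤ κ := by
        have hle1 : Real.sin (h θ - θ)^2 * Real.sin θ ≤ 1 := by
          have := mul_le_mul (Real.sin_sq_le_one (h θ - θ)) hsθ1 hsθ.le zero_le_one
          linarith
        calc κ * Real.sin (h θ - θ)^2 * Real.sin θ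
            = κ * (Real.sin (h θ - θ)^2 * Real.sin θ) := by ring
          _ ≤ κ * 1 := mul_le_mul_of_nonneg_left hle1 hκ0.le
          _ = κ := mul_one κ
      rw [hF]; dsimp only; linarith
  -- measurability
  have hFmeas : Measurable F := by
    rw [hF]
    have hhm : Measurable h := by
      rw [hh]
      refine Measurable.ite (measurableSet_le measurable_id measurable_const)
        (measurable_const.add measurable_id) ?_
      exact Measurable.ite (measurableSet_le measurable_id measurable_const)
        (measurable_const.sub ((measurable_id.sub measurable_const).const_mul m))
        measurable_id
    have h1 : Measurable (fun θ => (deriv h θ)^2 * Real.sin θ) :=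
      ((measurable_deriv h).pow_const 2).mul Real.measurable_sin
    have h2 : Measurable (fun θ => Real.sin (h θ)^2 / Real.sin θ) :=
      ((Real.measurable_sin.comp hhm).pow_const 2).div Real.measurable_sin
    have h3 : Measurable (fun θ => κ * Real.sin (h θ - θ)^2 * Real.sin θ) :=
      ((measurable_const.mul ((Real.measurable_sin.comp
        (hhm.sub measurable_id)).pow_const 2))).mul Real.measurable_sin
    exact (h1.add h2).add h3
  -- a.e. avoidance of finitely many points
  have hne : ∀ a : ℝ, ∀ᵐ θ : ℝ, θ ≠ a := by
    intro a
    rw [MeasureTheory.ae_iff]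
    simpa using Real.volume_singleton (x := a)
  -- integrability on the three pieces
  have hint : ∀ a b : ℝ, a ≤ b → (C : ℝ) → (∀ᵐ θ : ℝ, θ ∈ Set.Ioc a b → ‖F θ‖ ≤ C) →
      IntervalIntegrable F MeasureTheory.volume a b := by
    intro a b hab C hC
    rw [intervalIntegrable_iff_integrableOn_Ioc_of_le hab]
    apply MeasureTheory.Integrable.mono' (g := fun _ => C)
      (MeasureTheory.integrableOn_const measure_Ioc_lt_top.ne)
      (hFmeas.aestronglyMeasurable.restrict)
    rw [MeasureTheory.ae_restrict_iff' measurableSet_Ioc]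
    exact hC
  have hi1 : IntervalIntegrable F MeasureTheory.volume 0 θ₀ := by
    apply hint 0 θ₀ hθ₀0.le 2
    filter_upwards [hne θ₀] with θ hθne hθ
    have hmem : θ ∈ Ioo (0:ℝ) θ₀ := ⟨hθ.1, lt_of_le_of_ne hθ.2 hθne⟩
    have hsθ : 0 < Real.sin θ :=
      Real.sin_pos_of_pos_of_lt_pi hmem.1 (by linarith [hmem.2])
    rw [hval1 θ hmem, Real.norm_eq_abs, abs_of_nonneg (by linarith)]
    linarith [Real.sin_le_one θ]
  have hi2 : IntervalIntegrable F MeasureTheory.volume θ₀ (π - θ₀) := by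
    apply hint θ₀ (π - θ₀) hmid.le (2*κ + 2)
    filter_upwards [hne (π - θ₀)] with θ hθne hθ
    have hmem : θ ∈ Ioo θ₀ (π - θ₀) := ⟨hθ.1, lt_of_le_of_ne hθ.2 hθne⟩
    obtain ⟨h0, hle⟩ := hbound2 θ hmem
    rw [Real.norm_eq_abs, abs_of_nonneg h0]
    exact hle
  have hi3 : IntervalIntegrable F MeasureTheory.volume (π - θ₀) π := by
    apply hint (π - θ₀) π hmidπ.le 2
    filter_upwards [hne π] with θ hθne hθ
    have hmem : θ ∈ Ioo (π - θ₀) π := ⟨hθ.1, lt_of_le_of_ne hθ.2 hθne⟩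
    have hsθ : 0 < Real.sin θ :=
      Real.sin_pos_of_pos_of_lt_pi (by linarith [hmem.1]) hmem.2
    rw [hval3 θ hmem, Real.norm_eq_abs, abs_of_nonneg (by linarith)]
    linarith [Real.sin_le_one θ]
  -- split the integral
  have hsplit : (∫ θ in (0:ℝ)..π, F θ) =
      (∫ θ in (0:ℝ)..θ₀, F θ) + (∫ θ in θ₀..(π - θ₀), F θ) + (∫ θ in (π - θ₀)..π, F θ) := by
    have e1 := intervalIntegral.integral_add_adjacent_intervals hi1 (hi2.trans hi3)
    have e2 := intervalIntegral.integral_add_adjacent_intervals hi2 hi3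
    linarith
  -- bound the three pieces
  have hc1 : IntervalIntegrable (fun _ : ℝ => (2:ℝ)) MeasureTheory.volume 0 θ₀ :=
    intervalIntegrable_const
  have hb1 : (∫ θ in (0:ℝ)..θ₀, F θ) ≤ 2 * θ₀ := by
    have := intervalIntegral.integral_mono_ae_restrict hθ₀0.le hi1 hc1 ?_
    · rw [intervalIntegral.integral_const] at this
      simpa [mul_comm] using this
    · refine (MeasureTheory.ae_restrict_iff' measurableSet_Icc).2 ?_
      filter_upwards [hne 0, hne θ₀] with θ h0 hθ0 hθ
      have hmem : θ ∈ Ioo (0:ℝ) θ₀ :=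
        ⟨lt_of_le_of_ne hθ.1 (Ne.symm h0), lt_of_le_of_ne hθ.2 hθ0⟩
      rw [hval1 θ hmem]
      linarith [Real.sin_le_one θ]
  have hb2 : (∫ θ in θ₀..(π - θ₀), F θ) ≤ (π - 2*θ₀) * (2*κ + 2) := by
    have := intervalIntegral.integral_mono_ae_restrict hmid.le hi2
      (intervalIntegrable_const (c := 2*κ+2)) ?_
    · rw [intervalIntegral.integral_const] at this
      calc (∫ θ in θ₀..(π - θ₀), F θ) ≤ (π - θ₀ - θ₀) • (2*κ+2) := this
        _ = (π - 2*θ₀) * (2*κ + 2) := by rw [smul_eq_mul]; ring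
    · refine (MeasureTheory.ae_restrict_iff' measurableSet_Icc).2 ?_
      filter_upwards [hne θ₀, hne (π - θ₀)] with θ h0 hθ0 hθ
      have hmem : θ ∈ Ioo θ₀ (π - θ₀) :=
        ⟨lt_of_le_of_ne hθ.1 (Ne.symm h0), lt_of_le_of_ne hθ.2 hθ0⟩
      exact (hbound2 θ hmem).2
  have hb3 : (∫ θ in (π - θ₀)..π, F θ) ≤ 2 * θ₀ := by
    have := intervalIntegral.integral_mono_ae_restrict hmidπ.le hi3
      (intervalIntegrable_const (c := (2:ℝ))) ?_
    · rw [intervalIntegral.integral_const] at this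
      calc (∫ θ in (π - θ₀)..π, F θ) ≤ (π - (π - θ₀)) • (2:ℝ) := this
        _ = 2 * θ₀ := by rw [smul_eq_mul]; ring
    · refine (MeasureTheory.ae_restrict_iff' measurableSet_Icc).2 ?_
      filter_upwards [hne (π - θ₀), hne π] with θ h0 hθ0 hθ
      have hmem : θ ∈ Ioo (π - θ₀) π :=
        ⟨lt_of_le_of_ne hθ.1 (Ne.symm h0), lt_of_le_of_ne hθ.2 hθ0⟩
      rw [hval3 θ hmem]
      linarith [Real.sin_le_one θ]
  -- final arithmetic
  have hgap : π - 2*θ₀ = π / Real.sqrt κ := by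
    rw [hθ₀]
    field_simp
    ring
  have hmidest : (π - 2*θ₀) * (2*κ + 2) ≤ 2*π*Real.sqrt κ + π := by
    rw [hgap, div_mul_eq_mul_div, div_le_iff₀ hs0]
    have e : (2*π*Real.sqrt κ + π) * Real.sqrt κ = 2*π*κ + π*Real.sqrt κ := by
      calc (2*π*Real.sqrt κ + π) * Real.sqrt κ
          = 2*π*(Real.sqrt κ*Real.sqrt κ) + π*Real.sqrt κ := by ring
        _ = 2*π*κ + π*Real.sqrt κ := by rw [hsq]
    rw [e]
    have e2 : π * 2 ≤ π * Real.sqrt κ := mul_le_mul_of_nonneg_left hs2 hπ.le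
    linarith
  have htotal : (∫ θ in (0:ℝ)..π, F θ) ≤ 3*π + 2*π*Real.sqrt κ := by
    rw [hsplit]
    have : 2*θ₀ ≤ π := by linarith
    linarith
  have hps : π * Real.sqrt κ ≤ 4 * Real.sqrt κ :=
    mul_le_mul_of_nonneg_right hπ4 hs0.le
  show (1/2 : ℝ) * (∫ θ in (0:ℝ)..π, F θ) ≤ 7 * Real.sqrt κ
  calc (1/2 : ℝ) * (∫ θ in (0:ℝ)..π, F θ)
      ≤ (1/2) * (3*π + 2*π*Real.sqrt κ) := by
        apply mul_le_mul_of_nonneg_left htotal (by norm_num)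
    _ ≤ 7 * Real.sqrt κ := by linarith
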